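/- The function f_n on 2n variables defined by f_n(x,y) = AND over i of (x_i XOR y_i) has exactly 2^n models, and every model of f_n is isolated: flipping any single bit of a model yields a non-model. Consequently, any BNN representation of f_n has at least 2^n positive prototypes. -/
import Mathlib


/-- (P,N) is a Boolean Nearest Neighbor representation of f (vectors indexed
by an arbitrary finite index type). -/
def IsBNN {ι : Type*} [Fintype ι] [DecidableEq ι] (f : (ι → Bool) → Bool)
    (P N : Finset (ι → Bool)) : Prop :=
  Disjoint P N ∧
  (∀ a, f a = true → ∃ b ∈ P, ∀ c ∈ N, hammingDist a b < hammingDist a c) ∧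
  (∀ a, f a = false → ∃ b ∈ N, ∀ c ∈ P, hammingDist a b < hammingDist a c)

/-- the function f_n(x,y) = ⋀_i (x_i XOR y_i) on 2n variables
(indexed by Fin n ⊕ Fin n) has exactly 2^n models, all of which are isolated,
and hence any BNN representation of f_n has at least 2^n positive prototypes. -/
theorem xor_conjunction_needs_exponential_bnn (n : ℕ) :
    (Finset.univ.filter
      (fun z : Fin n ⊕ Fin n → Bool =>
        (∀ i : Fin n, z (Sum.inl i) ≠ z (Sum.inr i)))).card = 2 ^ n ∧
    (∀ z : Fin n ⊕ Fin n → Bool,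
      (∀ i : Fin n, z (Sum.inl i) ≠ z (Sum.inr i)) →
      ∀ w : Fin n ⊕ Fin n → Bool, hammingDist z w = 1 →
        ¬ (∀ i : Fin n, w (Sum.inl i) ≠ w (Sum.inr i))) ∧
    (∀ P N : Finset (Fin n ⊕ Fin n → Bool),
      IsBNN (fun z => decide (∀ i : Fin n, z (Sum.inl i) ≠ z (Sum.inr i))) P N →
      2 ^ n ≤ P.card) := by
  classical
  set M := Finset.univ.filter
      (fun z : Fin n ⊕ Fin n → Bool =>
        (∀ i : Fin n, z (Sum.inl i) ≠ z (Sum.inr i))) with hMdef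
  have hcard : M.card = 2 ^ n := by
    have : (2:ℕ) ^ n = (Finset.univ : Finset (Fin n → Bool)).card := by
      simp [Finset.card_univ]
    rw [this]
    have hi : ∀ (z : Fin n ⊕ Fin n → Bool), z ∈ M →
        (fun i => z (Sum.inl i)) ∈ (Finset.univ : Finset (Fin n → Bool)) := by
      intro z hz; simp
    have hjm : ∀ (x : Fin n → Bool), x ∈ (Finset.univ : Finset (Fin n → Bool)) →
        Sum.elim x (fun i => !x i) ∈ M := by
      intro x hx
      simp only [hMdef, Finset.mem_filter, Finset.mem_univ, true_and]
      intro i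
      cases h : x i <;> simp
    have linv : ∀ (z : Fin n ⊕ Fin n → Bool), z ∈ M →
        Sum.elim (fun i => z (Sum.inl i)) (fun i => !z (Sum.inl i)) = z := by
      intro z hz
      simp only [hMdef, Finset.mem_filter, Finset.mem_univ, true_and] at hz
      funext i
      cases i with
      | inl i => simp
      | inr i =>
        have := hz i
        cases h1 : z (Sum.inl i) <;> cases h2 : z (Sum.inr i) <;> simp_all
    have rinv : ∀ (x : Fin n → Bool), x ∈ (Finset.univ : Finset (Fin n → Bool)) →
        (fun i => Sum.elim x (fun i => !x i) (Sum.inl i)) = x := by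
      intro x hx; funext i; simp
    exact Finset.card_bij' (fun z _ => fun i => z (Sum.inl i))
      (fun x _ => Sum.elim x (fun i => !x i)) hi hjm
      (fun z hz => linv z hz) (fun x hx => rinv x hx)
  have hiso : ∀ z : Fin n ⊕ Fin n → Bool,
      (∀ i : Fin n, z (Sum.inl i) ≠ z (Sum.inr i)) →
      ∀ w : Fin n ⊕ Fin n → Bool, hammingDist z w = 1 →
        ¬ (∀ i : Fin n, w (Sum.inl i) ≠ w (Sum.inr i)) := by
    intro z hz w hd hw
    rw [hammingDist] at hd
    obtain ⟨j, hj⟩ := Finset.card_eq_one.mp hd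
    have hmem : ∀ i, z i ≠ w i ↔ i = j := by
      intro i
      constructor
      · intro h
        have : i ∈ Finset.univ.filter (fun i => z i ≠ w i) := by simp [h]
        rw [hj] at this; simpa using this
      · intro h
        have : j ∈ ({j} : Finset _) := by simp
        rw [← hj] at this
        simp only [Finset.mem_filter] at this
        exact h ▸ this.2
    have heq : ∀ i, i ≠ j → z i = w i := by
      intro i hi
      by_contra h
      exact hi ((hmem i).mp h)
    cases j with
    | inl k =>
      have h1 : z (Sum.inr k) = w (Sum.inr k) := heq _ (by simp)
      have h2 := hz k
      have h3 := hw k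
      have h4 : z (Sum.inl k) ≠ w (Sum.inl k) := (hmem _).mpr rfl
      cases hA : z (Sum.inl k) <;> cases hB : z (Sum.inr k) <;>
        cases hC : w (Sum.inl k) <;> simp_all
    | inr k =>
      have h1 : z (Sum.inl k) = w (Sum.inl k) := heq _ (by simp)
      have h2 := hz k
      have h3 := hw k
      have h4 : z (Sum.inr k) ≠ w (Sum.inr k) := (hmem _).mpr rfl
      cases hA : z (Sum.inl k) <;> cases hB : z (Sum.inr k) <;>
        cases hC : w (Sum.inr k) <;> simp_all
  refine ⟨hcard, hiso, ?_⟩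
  rintro P N ⟨hdisj, hpos, hneg⟩
  have hsub : M ⊆ P := by
    intro z hzM
    have hzM' : ∀ i : Fin n, z (Sum.inl i) ≠ z (Sum.inr i) := by
      simpa [hMdef] using hzM
    by_contra hzP
    obtain ⟨b, hbP, hb⟩ := hpos z (by simp [hzM'])
    have hzb : z ≠ b := fun h => hzP (h ▸ hbP)
    obtain ⟨j, hj⟩ : ∃ j, z j ≠ b j := Function.ne_iff.mp hzb
    set w := Function.update z j (b j) with hwdef
    have hzw : hammingDist z w = 1 := by
      rw [hammingDist]
      have : Finset.univ.filter (fun i => z i ≠ w i) = {j} := by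
        ext i
        by_cases h : i = j <;>
          simp [hwdef, Function.update, h, hj]
      rw [this]; simp
    have hjmem : j ∈ Finset.univ.filter (fun i => z i ≠ b i) := by simp [hj]
    have hwb : hammingDist w b + 1 = hammingDist z b := by
      rw [hammingDist, hammingDist]
      have : Finset.univ.filter (fun i => w i ≠ b i)
          = (Finset.univ.filter (fun i => z i ≠ b i)).erase j := by
        ext i
        by_cases h : i = j <;>
          simp [hwdef, Function.update, h]
      rw [this, Finset.card_erase_of_mem hjmem]
      have : 0 < (Finset.univ.filter (fun i => z i ≠ b i)).card :=
        Finset.card_pos.mpr ⟨j, hjmem⟩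
      omega
    have hwnm : ¬ (∀ i : Fin n, w (Sum.inl i) ≠ w (Sum.inr i)) :=
      hiso z hzM' w hzw
    obtain ⟨c, hcN, hc⟩ := hneg w (by simp [hwnm])
    have h3 := hc b hbP
    have h4 := hb c hcN
    have h5 := hammingDist_triangle z w c
    omega
  calc 2 ^ n = M.card := hcard.symm
    _ ≤ P.card := Finset.card_le_card hsub
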